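/- arXiv:0905.4482 — 4 statements merged into one kernel-verified Lean document; each statement's English description precedes it below -/
import Mathlib

section
/- Let v be a vector in ℝ^d and let T be a positive integer. Let v_T denote a vector consisting of the T largest-magnitude coordinates of v (with all other coordinates set to zero, ties broken arbitrarily). Then ‖v − v_T‖₂ ≤ ‖v‖₁ / (2√T). -/
/-- The Euclidean (ℓ2) norm of a finitely-indexed real vector. -/
noncomputable def l2 {ι : Type*} [Fintype ι] (v : ι → ℝ) : ℝ :=
  Real.sqrt (∑ i, (v i) ^ 2)

/-- The ℓ1 norm of a finitely-indexed real vector. -/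
noncomputable def l1 {ι : Type*} [Fintype ι] (v : ι → ℝ) : ℝ :=
  ∑ i, |v i|

/-- The restriction of a vector to a set of coordinates (zero elsewhere). -/
def restr {d : ℕ} (S : Finset (Fin d)) (v : Fin d → ℝ) : Fin d → ℝ :=
  fun i => if i ∈ S then v i else 0

/-- If `v_T = restr S v` keeps a set `S` of `T` largest-magnitude
coordinates of `v`, then `‖v − v_T‖₂ ≤ ‖v‖₁ / (2√T)`. -/
theorem stmt0 (d T : ℕ) (hT : 0 < T) (v : Fin d → ℝ)
    (S : Finset (Fin d)) (hcard : S.card = T)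
    (hbig : ∀ i ∈ S, ∀ j ∉ S, |v j| ≤ |v i|) :
    l2 (v - restr S v) ≤ l1 v / (2 * Real.sqrt T) := by
  classical
  set a := ∑ i ∈ S, |v i| with ha
  set b := ∑ i ∈ Sᶜ, |v i| with hb
  have ha0 : 0 ≤ a := Finset.sum_nonneg fun i _ => abs_nonneg _
  have hb0 : 0 ≤ b := Finset.sum_nonneg fun i _ => abs_nonneg _
  have hT' : (0:ℝ) < T := by exact_mod_cast hT
  have hbound : ∀ j ∈ Sᶜ, |v j| ≤ a / T := by
    intro j hj
    rw [le_div_iff₀ hT']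
    have : |v j| * T = ∑ i ∈ S, |v j| := by
      rw [Finset.sum_const, hcard, nsmul_eq_mul, mul_comm]
    rw [this]
    exact Finset.sum_le_sum fun i hi => hbig i hi j (Finset.mem_compl.mp hj)
  have hsum : ∑ i, (v i - restr S v i) ^ 2 = ∑ j ∈ Sᶜ, (v j) ^ 2 := by
    rw [← Finset.sum_add_sum_compl S]
    have h1 : ∑ i ∈ S, (v i - restr S v i) ^ 2 = 0 := by
      apply Finset.sum_eq_zero
      intro i hi
      simp [restr, hi]
    have h2 : ∀ j ∈ Sᶜ, (v j - restr S v j) ^ 2 = (v j) ^ 2 := by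
      intro j hj
      have : j ∉ S := Finset.mem_compl.mp hj
      simp [restr, this]
    rw [h1, Finset.sum_congr rfl h2, zero_add]
  have hkey : ∑ j ∈ Sᶜ, (v j) ^ 2 ≤ (a / T) * b := by
    calc ∑ j ∈ Sᶜ, (v j) ^ 2 ≤ ∑ j ∈ Sᶜ, (a / T) * |v j| := by
          apply Finset.sum_le_sum
          intro j hj
          have h1 := hbound j hj
          have h2 : (v j) ^ 2 = |v j| * |v j| := by rw [← sq_abs, sq]
          rw [h2]
          exact mul_le_mul_of_nonneg_right h1 (abs_nonneg _)
      _ = (a / T) * b := by rw [← Finset.mul_sum]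
  have hamgm : (a / T) * b ≤ ((a + b) / (2 * Real.sqrt T)) ^ 2 := by
    have hs : Real.sqrt T ^ 2 = T := Real.sq_sqrt hT'.le
    have hs0 : 0 < Real.sqrt T := Real.sqrt_pos.mpr hT'
    rw [div_pow, mul_pow, hs, div_mul_eq_mul_div, div_le_div_iff₀ hT' (by positivity)]
    nlinarith [sq_nonneg (a - b)]
  have hl1 : l1 v = a + b := by
    rw [l1, ← Finset.sum_add_sum_compl S]
  rw [l2, hl1]
  calc Real.sqrt (∑ i, (v i - restr S v i) ^ 2)
      ≤ Real.sqrt (((a + b) / (2 * Real.sqrt T)) ^ 2) := by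
        apply Real.sqrt_le_sqrt
        rw [hsum]
        exact hkey.trans hamgm
    _ = (a + b) / (2 * Real.sqrt T) := by
        rw [Real.sqrt_sq (by positivity)]
end

section
/- (Local approximation.) Let Φ be an m×d real matrix satisfying the restricted isometry condition with parameters (2s, ε), where 0 < ε ≤ 0.03. Then for every s-sparse vector x ∈ ℝ^d and every index set I ⊆ {1,…,d} with |I| ≤ s, the observation vector y = Φ*Φx satisfies ‖y|_I − x|_I‖₂ ≤ 2.03 ε ‖x‖₂. -/
/-- A vector is `s`-sparse if it has at most `s` nonzero coordinates. -/
def Sparse {d : ℕ} (s : ℕ) (v : Fin d → ℝ) : Prop :=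
  {i | v i ≠ 0}.ncard ≤ s

/-- `Φ` satisfies the restricted isometry condition with parameters `(r, ε)`:
`(1−ε)‖x‖₂ ≤ ‖Φx‖₂ ≤ (1+ε)‖x‖₂` for every `r`-sparse `x`. -/
def RIC {m d : ℕ} (Φ : Matrix (Fin m) (Fin d) ℝ) (r : ℕ) (ε : ℝ) : Prop :=
  ∀ v : Fin d → ℝ, Sparse r v →
    (1 - ε) * l2 v ≤ l2 (Φ.mulVec v) ∧ l2 (Φ.mulVec v) ≤ (1 + ε) * l2 v

lemma l2_nonneg {ι : Type*} [Fintype ι] (v : ι → ℝ) : 0 ≤ l2 v := Real.sqrt_nonneg _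

lemma l2_sq {ι : Type*} [Fintype ι] (v : ι → ℝ) : l2 v ^ 2 = ∑ i, v i ^ 2 :=
  Real.sq_sqrt (Finset.sum_nonneg fun _ _ => sq_nonneg _)

lemma polar {ι : Type*} [Fintype ι] (f g : ι → ℝ) :
    (∑ i, (f + g) i ^ 2) - (∑ i, (f - g) i ^ 2) = 4 * ∑ i, f i * g i := by
  rw [← Finset.sum_sub_distrib, Finset.mul_sum]
  exact Finset.sum_congr rfl fun i _ => by simp only [Pi.add_apply, Pi.sub_apply]; ring

lemma paral {ι : Type*} [Fintype ι] (f g : ι → ℝ) :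
    (∑ i, (f + g) i ^ 2) + (∑ i, (f - g) i ^ 2) = 2 * ((∑ i, f i ^ 2) + ∑ i, g i ^ 2) := by
  calc (∑ i, (f + g) i ^ 2) + (∑ i, (f - g) i ^ 2)
      = ∑ i, (2 * f i ^ 2 + 2 * g i ^ 2) := by
        rw [← Finset.sum_add_distrib]
        exact Finset.sum_congr rfl fun i _ => by simp only [Pi.add_apply, Pi.sub_apply]; ring
    _ = 2 * ((∑ i, f i ^ 2) + ∑ i, g i ^ 2) := by
        rw [Finset.sum_add_distrib, ← Finset.mul_sum, ← Finset.mul_sum]; ring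

/-- squared RIC bound -/
lemma sqRIC {m d : ℕ} {Φ : Matrix (Fin m) (Fin d) ℝ} {r : ℕ} {ε : ℝ}
    (hΦ : RIC Φ r ε) (hε0 : 0 < ε) (hε1 : ε ≤ 1) {v : Fin d → ℝ} (hv : Sparse r v) :
    |(∑ i, (Φ.mulVec v) i ^ 2) - ∑ i, v i ^ 2| ≤ (2*ε + ε^2) * ∑ i, v i ^ 2 := by
  obtain ⟨h1, h2⟩ := hΦ v hv
  have hv0 : 0 ≤ l2 v := l2_nonneg v
  have hw0 : 0 ≤ l2 (Φ.mulVec v) := l2_nonneg _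
  have e1 := pow_le_pow_left₀ (mul_nonneg (by linarith : (0:ℝ) ≤ 1 - ε) hv0) h1 2
  have e2 := pow_le_pow_left₀ hw0 h2 2
  rw [mul_pow, l2_sq, l2_sq] at e1 e2
  have hS : 0 ≤ ∑ i, v i ^ 2 := Finset.sum_nonneg fun _ _ => sq_nonneg _
  rw [abs_le]
  constructor <;> nlinarith

lemma sparse_subset {d s : ℕ} {u v : Fin d → ℝ}
    (h : {i | u i ≠ 0} ⊆ {i | v i ≠ 0}) (hv : Sparse s v) : Sparse s u :=
  le_trans (Set.ncard_le_ncard h (Set.toFinite _)) hv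

/-- approximate orthogonality -/
lemma approxOrth {m d : ℕ} {Φ : Matrix (Fin m) (Fin d) ℝ} {r : ℕ} {ε : ℝ}
    (hΦ : RIC Φ r ε) (hε0 : 0 < ε) (hε1 : ε ≤ 1) (a b : Fin d → ℝ)
    (h1 : Sparse r (a + b)) (h2 : Sparse r (a - b)) :
    |(∑ i, (Φ.mulVec a) i * (Φ.mulVec b) i) - ∑ i, a i * b i|
      ≤ (2*ε + ε^2)/2 * ((∑ i, a i ^ 2) + ∑ i, b i ^ 2) := by
  have hp := sqRIC hΦ hε0 hε1 h1
  have hm := sqRIC hΦ hε0 hε1 h2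
  rw [Matrix.mulVec_add] at hp
  rw [Matrix.mulVec_sub] at hm
  have kp := polar (Φ.mulVec a) (Φ.mulVec b)
  have km := polar a b
  have kpar := paral a b
  have h4 : 4 * ((∑ i, (Φ.mulVec a) i * (Φ.mulVec b) i) - ∑ i, a i * b i)
      = ((∑ i, (Φ.mulVec a + Φ.mulVec b) i ^ 2) - ∑ i, (a + b) i ^ 2)
        - ((∑ i, (Φ.mulVec a - Φ.mulVec b) i ^ 2) - ∑ i, (a - b) i ^ 2) := by
    linarith
  have kpar2 : (2*ε + ε^2) * (∑ i, (a + b) i ^ 2) + (2*ε + ε^2) * (∑ i, (a - b) i ^ 2)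
      = (2*ε + ε^2) * (2 * ((∑ i, a i ^ 2) + ∑ i, b i ^ 2)) := by
    rw [← mul_add, kpar]
  rw [abs_le] at hp hm ⊢
  constructor <;> linarith [hp.1, hp.2, hm.1, hm.2]

/-- **Local approximation.** Under RIC with parameters `(2s, ε)`,
for every `s`-sparse `x` and every `I` with `|I| ≤ s`, the observation vector
`y = Φ*Φx` satisfies `‖y|_I − x|_I‖₂ ≤ 2.03 ε ‖x‖₂`. -/
theorem stmt2 (m d s : ℕ) (ε : ℝ) (hε0 : 0 < ε) (hε : ε ≤ 0.03)
    (Φ : Matrix (Fin m) (Fin d) ℝ) (hΦ : RIC Φ (2 * s) ε)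
    (x : Fin d → ℝ) (hx : Sparse s x)
    (I : Finset (Fin d)) (hI : I.card ≤ s) :
    l2 (restr I (Φ.transpose.mulVec (Φ.mulVec x)) - restr I x) ≤ 2.03 * ε * l2 x := by
  have hε1 : ε ≤ 1 := by linarith
  by_cases hx0 : x = 0
  · subst hx0
    simp [restr, l2, Matrix.mulVec_zero]
  set y : Fin d → ℝ := Φ.transpose.mulVec (Φ.mulVec x) with hy
  set u : Fin d → ℝ := restr I y - restr I x with hu
  -- support of u is in I
  have husupp : ∀ i, u i ≠ 0 → i ∈ I := by
    intro i hi
    by_contra hc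
    exact hi (by simp [hu, restr, hc])
  -- sparsity of linear combinations
  have hcomb : ∀ t : ℝ, Sparse (2 * s) (fun i => u i + t * x i) := by
    intro t
    have hsub : {i | (fun i => u i + t * x i) i ≠ 0} ⊆ (↑I ∪ {i | x i ≠ 0}) := by
      intro i hi
      by_contra hc
      simp only [Set.mem_union, Finset.mem_coe, Set.mem_setOf_eq, not_or, not_not] at hc
      obtain ⟨hcI, hcx⟩ := hc
      have hui : u i = 0 := by
        by_contra h'; exact hcI (husupp i h')
      exact hi (by simp [hui, hcx])
    refine le_trans (Set.ncard_le_ncard hsub (Set.toFinite _)) ?_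
    refine le_trans (Set.ncard_union_le _ _) ?_
    rw [Set.ncard_coe_finset I]
    unfold Sparse at hx
    omega
  -- the key identity : ⟨u,u⟩ = ⟨Φu, Φx⟩ - ⟨u, x⟩
  have keyA : ∑ i, u i * u i = (∑ i, u i * y i) - ∑ i, u i * x i := by
    rw [← Finset.sum_sub_distrib]
    refine Finset.sum_congr rfl fun i _ => ?_
    by_cases h : i ∈ I
    · have : u i = y i - x i := by simp [hu, restr, h]
      rw [this]; ring
    · have : u i = 0 := by simp [hu, restr, h]
      rw [this]; ring
  have keyB : ∑ i, u i * y i = ∑ i, (Φ.mulVec u) i * (Φ.mulVec x) i := by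
    show dotProduct u y = dotProduct (Φ.mulVec u) (Φ.mulVec x)
    rw [hy, Matrix.dotProduct_mulVec, Matrix.vecMul_transpose]
  have hSuu : ∑ i, u i * u i = ∑ i, u i ^ 2 :=
    Finset.sum_congr rfl fun i _ => (pow_two (u i)).symm
  -- positivity of ‖x‖
  have hSx : 0 < ∑ i, x i ^ 2 := by
    obtain ⟨j, hj⟩ := Function.ne_iff.mp hx0
    exact Finset.sum_pos' (fun i _ => sq_nonneg _)
      ⟨j, Finset.mem_univ j, by have hj' : x j ≠ 0 := hj; positivity⟩
  have hl2x : 0 < l2 x := Real.sqrt_pos.mpr hSx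
  set t : ℝ := l2 u / l2 x with ht
  have ht0 : 0 ≤ t := div_nonneg (l2_nonneg u) hl2x.le
  -- sparsity hypotheses for approxOrth
  have h1 : Sparse (2 * s) (u + t • x) := by
    have := hcomb t
    have he : (u + t • x) = fun i => u i + t * x i := rfl
    rwa [he]
  have h2 : Sparse (2 * s) (u - t • x) := by
    have := hcomb (-t)
    have he : (u - t • x) = fun i => u i + (-t) * x i := by
      funext i; simp [Pi.sub_apply]; ring
    rwa [he]
  have H := approxOrth hΦ hε0 hε1 u (t • x) h1 h2
  rw [Matrix.mulVec_smul] at H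
  -- simplify the scalar multiples inside H
  have e1 : ∑ i, (Φ.mulVec u) i * (t • Φ.mulVec x) i = t * ∑ i, (Φ.mulVec u) i * (Φ.mulVec x) i := by
    rw [Finset.mul_sum]; exact Finset.sum_congr rfl fun i _ => by simp [Pi.smul_apply]; ring
  have e2 : ∑ i, u i * (t • x) i = t * ∑ i, u i * x i := by
    rw [Finset.mul_sum]; exact Finset.sum_congr rfl fun i _ => by simp [Pi.smul_apply]; ring
  have e3 : ∑ i, (t • x) i ^ 2 = t ^ 2 * ∑ i, x i ^ 2 := by
    rw [Finset.mul_sum]; exact Finset.sum_congr rfl fun i _ => by simp [Pi.smul_apply]; ring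
  rw [e1, e2, e3] at H
  -- t^2 * Sx = Su
  have hl2u : l2 u = t * l2 x := by
    rw [ht, div_mul_cancel₀ _ (ne_of_gt hl2x)]
  have hSu : l2 u ^ 2 = ∑ i, u i ^ 2 := l2_sq u
  have hSx2 : l2 x ^ 2 = ∑ i, x i ^ 2 := l2_sq x
  have e4 : t ^ 2 * ∑ i, x i ^ 2 = ∑ i, u i ^ 2 := by
    rw [← hSx2, ← hSu, hl2u]; ring
  rw [e4] at H
  have hcollapse : t * ((∑ i, (Φ.mulVec u) i * (Φ.mulVec x) i) - ∑ i, u i * x i)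
      = t * ∑ i, u i ^ 2 := by
    rw [← keyB, ← hSuu, keyA]
  have Hle : t * ∑ i, u i ^ 2 ≤ (2*ε + ε^2) * ∑ i, u i ^ 2 := by
    have := abs_le.mp H
    calc t * ∑ i, u i ^ 2 = t * (∑ i, (Φ.mulVec u) i * (Φ.mulVec x) i) - t * ∑ i, u i * x i := by
          rw [← hcollapse]; ring
      _ ≤ (2*ε + ε^2)/2 * ((∑ i, u i ^ 2) + ∑ i, u i ^ 2) := by linarith [this.2]
      _ = (2*ε + ε^2) * ∑ i, u i ^ 2 := by ring
  by_cases hu0 : ∑ i, u i ^ 2 = 0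
  · have : l2 u = 0 := by rw [l2, hu0, Real.sqrt_zero]
    rw [this]; positivity
  · have hSupos : 0 < ∑ i, u i ^ 2 :=
      lt_of_le_of_ne (Finset.sum_nonneg fun _ _ => sq_nonneg _) (Ne.symm hu0)
    have htle : t ≤ 2*ε + ε^2 := by
      by_contra hc
      push_neg at hc
      nlinarith
    rw [hl2u]
    have k1 := mul_le_mul_of_nonneg_right htle hl2x.le
    have k2 := mul_le_mul_of_nonneg_right (mul_le_mul_of_nonneg_right hε hε0.le) hl2x.le
    nlinarith [k1, k2]
end

section
/- Let z, w ∈ ℝ^d, let t be a positive integer, and suppose z is t-sparse (it has at most t nonzero coordinates). Let w_t denote a vector consisting of the t largest-magnitude coordinates of w (with all other coordinates set to zero, ties broken arbitrarily). Then ‖z − w_t‖₂ ≤ 3 ‖z − w‖₂. -/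
lemma l2_eq {d : ℕ} (v : Fin d → ℝ) :
    l2 v = ‖(WithLp.equiv 2 (Fin d → ℝ)).symm v‖ := by
  rw [EuclideanSpace.norm_eq]
  simp [l2, Real.norm_eq_abs, sq_abs]

lemma l2_triangle {d : ℕ} (a b : Fin d → ℝ) : l2 (a + b) ≤ l2 a + l2 b := by
  rw [l2_eq, l2_eq, l2_eq]
  exact norm_add_le _ _

/-- If `z` is `t`-sparse and `w_t = restr S w` is a best `t`-sparse
approximation of `w` (`S` a set of `t` largest-magnitude coordinates of `w`), then
`‖z − w_t‖₂ ≤ 3 ‖z − w‖₂`. -/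
theorem stmt5 (d t : ℕ) (ht : 0 < t) (z w : Fin d → ℝ) (hz : Sparse t z)
    (S : Finset (Fin d)) (hcard : S.card = t)
    (hbig : ∀ i ∈ S, ∀ j ∉ S, |w j| ≤ |w i|) :
    l2 (z - restr S w) ≤ 3 * l2 (z - w) := by
  classical
  set T : Finset (Fin d) := Finset.univ.filter (fun i => z i ≠ 0) with hT
  have hTcard : T.card ≤ t := by
    have hz' : {i | z i ≠ 0}.ncard ≤ t := hz
    have heq : {i | z i ≠ 0}.ncard = T.card := by
      rw [Set.ncard_eq_toFinset_card', Set.toFinset_setOf]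
    rw [heq] at hz'; exact hz'
  -- cardinality comparison
  have hAB : (T \ S).card ≤ (S \ T).card := by
    have h1 : (T \ S).card + (T ∩ S).card = T.card := Finset.card_sdiff_add_card_inter T S
    have h2 : (S \ T).card + (S ∩ T).card = S.card := Finset.card_sdiff_add_card_inter S T
    have h3 : (T ∩ S).card = (S ∩ T).card := by rw [Finset.inter_comm]
    omega
  -- key inequality : off-S mass of w is at most ‖z-w‖²
  have key : ∑ i ∈ Sᶜ, (w i) ^ 2 ≤ ∑ i, (z i - w i) ^ 2 := by
    have hsplit : ∑ i ∈ Sᶜ, (w i) ^ 2 =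
        ∑ i ∈ Sᶜ.filter (fun i => i ∈ T), (w i) ^ 2 +
        ∑ i ∈ Sᶜ.filter (fun i => i ∉ T), (w i) ^ 2 :=
      (Finset.sum_filter_add_sum_filter_not _ _ _).symm
    have hA : Sᶜ.filter (fun i => i ∈ T) = T \ S := by
      ext i; simp [Finset.mem_sdiff, Finset.mem_compl, and_comm]
    -- first piece: bounded by sum over S \ T
    have hpiece1 : ∑ i ∈ Sᶜ.filter (fun i => i ∈ T), (w i) ^ 2 ≤
        ∑ i ∈ S \ T, (z i - w i) ^ 2 := by
      rw [hA]
      have hSne : S.Nonempty := Finset.card_pos.mp (hcard ▸ ht)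
      obtain ⟨j₀, hj₀S, hj₀min⟩ := Finset.exists_min_image S (fun j => |w j|) hSne
      have c_nonneg : (0:ℝ) ≤ (w j₀) ^ 2 := sq_nonneg _
      have h1 : ∑ i ∈ T \ S, (w i) ^ 2 ≤ (T \ S).card • ((w j₀) ^ 2) := by
        apply Finset.sum_le_card_nsmul
        intro i hi
        have hiS : i ∉ S := (Finset.mem_sdiff.mp hi).2
        have := hbig j₀ hj₀S i hiS
        calc (w i) ^ 2 = |w i| ^ 2 := (sq_abs _).symm
          _ ≤ |w j₀| ^ 2 := pow_le_pow_left₀ (abs_nonneg _) (hbig j₀ hj₀S i hiS) 2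
          _ = (w j₀) ^ 2 := sq_abs _
      have h2 : (S \ T).card • ((w j₀) ^ 2) ≤ ∑ i ∈ S \ T, (z i - w i) ^ 2 := by
        apply Finset.card_nsmul_le_sum
        intro i hi
        obtain ⟨hiS, hiT⟩ := Finset.mem_sdiff.mp hi
        have hzi : z i = 0 := by
          by_contra h
          exact hiT (Finset.mem_filter.mpr ⟨Finset.mem_univ i, h⟩)
        rw [hzi, zero_sub, neg_sq]
        calc (w j₀) ^ 2 = |w j₀| ^ 2 := (sq_abs _).symm
          _ ≤ |w i| ^ 2 := pow_le_pow_left₀ (abs_nonneg _) (hj₀min i hiS) 2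
          _ = (w i) ^ 2 := sq_abs _
      have hmid : (T \ S).card • ((w j₀) ^ 2) ≤ (S \ T).card • ((w j₀) ^ 2) := by
        rw [nsmul_eq_mul, nsmul_eq_mul]
        exact mul_le_mul_of_nonneg_right (Nat.cast_le.mpr hAB) c_nonneg
      linarith
    -- second piece: z = 0 there
    have hpiece2 : ∑ i ∈ Sᶜ.filter (fun i => i ∉ T), (w i) ^ 2 =
        ∑ i ∈ Sᶜ.filter (fun i => i ∉ T), (z i - w i) ^ 2 := by
      apply Finset.sum_congr rfl
      intro i hi
      have hiT : i ∉ T := (Finset.mem_filter.mp hi).2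
      have hzi : z i = 0 := by
        by_contra h
        exact hiT (Finset.mem_filter.mpr ⟨Finset.mem_univ i, h⟩)
      rw [hzi, zero_sub, neg_sq]
    have hdisj : Disjoint (S \ T) (Sᶜ.filter (fun i => i ∉ T)) := by
      apply Finset.disjoint_left.mpr
      intro i hi hi'
      exact (Finset.mem_compl.mp (Finset.mem_filter.mp hi').1) (Finset.mem_sdiff.mp hi).1
    have hunion : ∑ i ∈ (S \ T) ∪ Sᶜ.filter (fun i => i ∉ T), (z i - w i) ^ 2 ≤
        ∑ i, (z i - w i) ^ 2 := by
      apply Finset.sum_le_sum_of_subset_of_nonneg (Finset.subset_univ _)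
      intro i _ _; exact sq_nonneg _
    rw [Finset.sum_union hdisj] at hunion
    linarith [hsplit, hpiece1, hpiece2]
  -- translate key into l2 bound
  have h1 : l2 (w - restr S w) ≤ l2 (z - w) := by
    unfold l2
    apply Real.sqrt_le_sqrt
    have hL : ∑ i, ((w - restr S w) i) ^ 2 = ∑ i ∈ Sᶜ, (w i) ^ 2 := by
      rw [← Finset.sum_compl_add_sum S (fun i => ((w - restr S w) i) ^ 2)]
      have hS0 : ∑ i ∈ S, ((w - restr S w) i) ^ 2 = 0 := by
        apply Finset.sum_eq_zero
        intro i hi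
        simp [restr, hi]
      rw [hS0, add_zero]
      apply Finset.sum_congr rfl
      intro i hi
      have : i ∉ S := Finset.mem_compl.mp hi
      simp [restr, this]
    rw [hL]
    simpa using key
  have htri : l2 (z - restr S w) ≤ l2 (z - w) + l2 (w - restr S w) := by
    have : z - restr S w = (z - w) + (w - restr S w) := by
      rw [sub_add_sub_cancel]
    rw [this]
    exact l2_triangle _ _
  have hnn : 0 ≤ l2 (z - w) := Real.sqrt_nonneg _
  linarith
end

section
/- Let Φ be an m×d real matrix and let c and r be positive integers. Then the restricted isometry constants satisfy δ_{cr} ≤ c · δ_{2r}. -/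
/-- `δ` satisfies the restricted isometry inequalities of `Φ` at sparsity level `r`
(quadratic form). -/
def RICq {m d : ℕ} (Φ : Matrix (Fin m) (Fin d) ℝ) (r : ℕ) (δ : ℝ) : Prop :=
  ∀ v : Fin d → ℝ, Sparse r v →
    (1 - δ) * (l2 v) ^ 2 ≤ (l2 (Φ.mulVec v)) ^ 2 ∧
      (l2 (Φ.mulVec v)) ^ 2 ≤ (1 + δ) * (l2 v) ^ 2

namespace Stmt8

noncomputable def NN {d : ℕ} (v : Fin d → ℝ) : ℝ := ∑ i, v i ^ 2

noncomputable def Q {m d : ℕ} (Φ : Matrix (Fin m) (Fin d) ℝ) (v : Fin d → ℝ) : ℝ :=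
  ∑ i, (Φ.mulVec v) i ^ 2

noncomputable def B {m d : ℕ} (Φ : Matrix (Fin m) (Fin d) ℝ) (x y : Fin d → ℝ) : ℝ :=
  ∑ i, (Φ.mulVec x) i * (Φ.mulVec y) i

lemma l2_sq {d : ℕ} (v : Fin d → ℝ) : l2 v ^ 2 = NN v :=
  Real.sq_sqrt (Finset.sum_nonneg fun i _ => sq_nonneg _)

lemma l2_sq' {m d : ℕ} (Φ : Matrix (Fin m) (Fin d) ℝ) (v : Fin d → ℝ) :
    l2 (Φ.mulVec v) ^ 2 = Q Φ v :=
  Real.sq_sqrt (Finset.sum_nonneg fun i _ => sq_nonneg _)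

lemma NN_nonneg {d : ℕ} (v : Fin d → ℝ) : 0 ≤ NN v :=
  Finset.sum_nonneg fun i _ => sq_nonneg _

lemma Q_nonneg {m d : ℕ} (Φ : Matrix (Fin m) (Fin d) ℝ) (v : Fin d → ℝ) : 0 ≤ Q Φ v :=
  Finset.sum_nonneg fun i _ => sq_nonneg _

lemma ricq_iff {m d : ℕ} (Φ : Matrix (Fin m) (Fin d) ℝ) (s : ℕ) (δ : ℝ) :
    RICq Φ s δ ↔ ∀ v, Sparse s v → (1 - δ) * NN v ≤ Q Φ v ∧ Q Φ v ≤ (1 + δ) * NN v := by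
  unfold RICq
  simp only [l2_sq, l2_sq']
  rfl

lemma abs_bound {m d : ℕ} {Φ : Matrix (Fin m) (Fin d) ℝ} {s : ℕ} {δ : ℝ}
    (h : RICq Φ s δ) {v : Fin d → ℝ} (hv : Sparse s v) :
    |Q Φ v - NN v| ≤ δ * NN v := by
  obtain ⟨h1, h2⟩ := (ricq_iff Φ s δ).1 h v hv
  rw [abs_le]; constructor <;> nlinarith

lemma sparse_mono {d : ℕ} {s t : ℕ} (hst : s ≤ t) {v : Fin d → ℝ} (hv : Sparse s v) :
    Sparse t v := le_trans hv (by exact_mod_cast hst)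

lemma sparse_add {d : ℕ} {s t : ℕ} {x y : Fin d → ℝ} (hx : Sparse s x) (hy : Sparse t y) :
    Sparse (s + t) (x + y) := by
  refine le_trans (le_trans (Set.ncard_le_ncard ?_ ((Set.toFinite _).union (Set.toFinite _)))
    (Set.ncard_union_le _ _)) (add_le_add hx hy)
  intro i hi
  simp only [Set.mem_setOf_eq, Set.mem_union, Pi.add_apply] at hi ⊢
  by_contra hcon
  push_neg at hcon
  exact hi (by rw [hcon.1, hcon.2, add_zero])

lemma sparse_sub {d : ℕ} {s t : ℕ} {x y : Fin d → ℝ} (hx : Sparse s x) (hy : Sparse t y) :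
    Sparse (s + t) (x - y) := by
  refine le_trans (le_trans (Set.ncard_le_ncard ?_ ((Set.toFinite _).union (Set.toFinite _)))
    (Set.ncard_union_le _ _)) (add_le_add hx hy)
  intro i hi
  simp only [Set.mem_setOf_eq, Set.mem_union, Pi.sub_apply] at hi ⊢
  by_contra hcon
  push_neg at hcon
  exact hi (by rw [hcon.1, hcon.2, sub_zero])

lemma Q_add {m d : ℕ} (Φ : Matrix (Fin m) (Fin d) ℝ) (x y : Fin d → ℝ) :
    Q Φ (x + y) = Q Φ x + 2 * B Φ x y + Q Φ y := by
  unfold Q B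
  simp only [Matrix.mulVec_add, Pi.add_apply, add_sq, Finset.sum_add_distrib,
    Finset.mul_sum, mul_assoc]

lemma Q_sub {m d : ℕ} (Φ : Matrix (Fin m) (Fin d) ℝ) (x y : Fin d → ℝ) :
    Q Φ (x - y) = Q Φ x - 2 * B Φ x y + Q Φ y := by
  unfold Q B
  simp only [Matrix.mulVec_sub, Pi.sub_apply, sub_sq, Finset.sum_add_distrib,
    Finset.sum_sub_distrib, Finset.mul_sum, mul_assoc]

lemma B_self {m d : ℕ} (Φ : Matrix (Fin m) (Fin d) ℝ) (x : Fin d → ℝ) :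
    B Φ x x = Q Φ x := by
  unfold Q B; simp [sq]

lemma NN_add {d : ℕ} {x y : Fin d → ℝ} (hd : ∀ i, x i * y i = 0) :
    NN (x + y) = NN x + NN y := by
  unfold NN
  rw [← Finset.sum_add_distrib]
  refine Finset.sum_congr rfl fun i _ => ?_
  have := hd i
  simp only [Pi.add_apply]
  linear_combination 2 * this

lemma NN_sub {d : ℕ} {x y : Fin d → ℝ} (hd : ∀ i, x i * y i = 0) :
    NN (x - y) = NN x + NN y := by
  unfold NN
  rw [← Finset.sum_add_distrib]
  refine Finset.sum_congr rfl fun i _ => ?_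
  have := hd i
  simp only [Pi.sub_apply]
  linear_combination (-2 : ℝ) * this

lemma cross {m d r : ℕ} {Φ : Matrix (Fin m) (Fin d) ℝ} {δ : ℝ}
    (h : RICq Φ (2 * r) δ) {x y : Fin d → ℝ} (hx : Sparse r x) (hy : Sparse r y)
    (hd : ∀ i, x i * y i = 0) :
    |B Φ x y| ≤ δ / 2 * (NN x + NN y) := by
  have hxy : Sparse (2 * r) (x + y) := by
    have := sparse_add hx hy; rwa [two_mul]
  have hxy' : Sparse (2 * r) (x - y) := by
    have := sparse_sub hx hy; rwa [two_mul]
  obtain ⟨h1, h2⟩ := (ricq_iff Φ _ δ).1 h _ hxy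
  obtain ⟨h3, h4⟩ := (ricq_iff Φ _ δ).1 h _ hxy'
  rw [NN_add hd] at h1 h2
  rw [NN_sub hd] at h3 h4
  rw [Q_add] at h1 h2
  rw [Q_sub] at h3 h4
  rw [abs_le]; constructor <;> nlinarith



lemma exists_ric {m d : ℕ} (Φ : Matrix (Fin m) (Fin d) ℝ) (s : ℕ) :
    ∃ δ : ℝ, 0 ≤ δ ∧ RICq Φ s δ := by
  set C : ℝ := ∑ i, ∑ j, (Φ i j) ^ 2 with hC
  have hC0 : 0 ≤ C := Finset.sum_nonneg fun i _ =>
    Finset.sum_nonneg fun j _ => sq_nonneg _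
  refine ⟨1 + C, by linarith, ?_⟩
  rw [ricq_iff]
  intro v _
  have hQle : Q Φ v ≤ C * NN v := by
    unfold Q NN
    rw [hC, Finset.sum_mul]
    refine Finset.sum_le_sum fun i _ => ?_
    exact Finset.sum_mul_sq_le_sq_mul_sq Finset.univ (fun j => Φ i j) v
  constructor
  · have : (1 - (1 + C)) * NN v ≤ 0 :=
      mul_nonpos_of_nonpos_of_nonneg (by linarith) (NN_nonneg v)
    linarith [Q_nonneg Φ v]
  · nlinarith [NN_nonneg v]

lemma key {m d c r : ℕ} (Φ : Matrix (Fin m) (Fin d) ℝ) (hr : 0 < r) {δ : ℝ}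
    (hδ : 0 ≤ δ) (h : RICq Φ (2 * r) δ) : RICq Φ (c * r) ((c : ℝ) * δ) := by
  rw [ricq_iff]
  intro v hv
  -- support finset
  set T : Finset (Fin d) := Finset.univ.filter (fun i => v i ≠ 0) with hTdef
  have hT : T.card ≤ c * r := by
    have : {i | v i ≠ 0} = ↑T := by ext i; simp [hTdef]
    have := hv
    unfold Sparse at this
    rwa [‹{i | v i ≠ 0} = ↑T›, Set.ncard_coe_finset] at this
  set pos : Fin d → ℕ := fun i => (T.filter (fun j => j < i)).card with hposdef
  have hpos_lt : ∀ i ∈ T, pos i < T.card := by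
    intro i hi
    exact Finset.card_lt_card ⟨Finset.filter_subset _ _, fun hsub =>
      by simpa using (Finset.mem_filter.1 (hsub hi)).2⟩
  have hpos_mono : ∀ i ∈ T, ∀ j ∈ T, i < j → pos i < pos j := by
    intro i hi j hj hij
    refine Finset.card_lt_card ⟨fun k hk => ?_, fun hsub => ?_⟩
    · have hk' := Finset.mem_filter.1 hk
      exact Finset.mem_filter.2 ⟨hk'.1, lt_trans hk'.2 hij⟩
    · have : i ∈ T.filter (fun k => k < j) := Finset.mem_filter.2 ⟨hi, hij⟩
      exact absurd (Finset.mem_filter.1 (hsub this)).2 (lt_irrefl i)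
  have hpos_inj : ∀ i ∈ T, ∀ j ∈ T, pos i = pos j → i = j := by
    intro i hi j hj hij
    rcases lt_trichotomy i j with h' | h' | h'
    · exact absurd hij (hpos_mono i hi j hj h').ne
    · exact h'
    · exact absurd hij.symm (hpos_mono j hj i hi h').ne
  set w : Fin c → Fin d → ℝ := fun k i => if pos i / r = (k : ℕ) then v i else 0 with hwdef
  -- pointwise decomposition
  have hpt : ∀ (i : Fin d) (f : ℝ → ℝ), f 0 = 0 → ∑ k : Fin c, f (w k i) = f (v i) := by
    intro i f hf0
    by_cases hvi : v i = 0
    · simp [hwdef, hvi, hf0]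
    · have hiT : i ∈ T := by simp [hTdef, hvi]
      have hp : pos i / r < c := (Nat.div_lt_iff_lt_mul hr).2 (lt_of_lt_of_le (hpos_lt i hiT) hT)
      rw [Finset.sum_eq_single (⟨pos i / r, hp⟩ : Fin c)]
      · simp [hwdef]
      · intro k _ hk
        have : pos i / r ≠ (k : ℕ) := fun hcon => hk (by ext; simp [← hcon])
        simp [hwdef, this, hf0]
      · simp
  -- sparsity of the blocks
  have hw_sparse : ∀ k : Fin c, Sparse r (w k) := by
    intro k
    have hsub : {i | w k i ≠ 0} ⊆ ↑(T.filter (fun i => pos i / r = (k : ℕ))) := by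
      intro i hi
      simp only [Set.mem_setOf_eq, hwdef] at hi
      by_cases hcond : pos i / r = (k : ℕ)
      · simp only [hcond, if_true] at hi
        simp [hTdef, hcond, hi]
      · simp [hcond] at hi
    refine le_trans (le_trans (Set.ncard_le_ncard hsub (Set.toFinite _))
      (le_of_eq (Set.ncard_coe_finset _))) ?_
    have : (T.filter (fun i => pos i / r = (k : ℕ))).card ≤ (Finset.Ico ((k : ℕ) * r) ((k : ℕ) * r + r)).card := by
      refine Finset.card_le_card_of_injOn pos ?_ ?_
      · intro i hi
        obtain ⟨hiT, hik⟩ := Finset.mem_filter.1 hi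
        refine Finset.mem_Ico.2 ⟨(Nat.le_div_iff_mul_le hr).1 (le_of_eq hik.symm), ?_⟩
        have h2 : pos i < ((k : ℕ) + 1) * r := (Nat.div_lt_iff_lt_mul hr).1 (by omega)
        simpa [add_mul] using h2
      · intro i hi j hj hij
        exact hpos_inj i (Finset.mem_filter.1 hi).1 j (Finset.mem_filter.1 hj).1 hij
    simpa using this
  -- disjointness
  have hdisj : ∀ k k' : Fin c, k ≠ k' → ∀ i, w k i * w k' i = 0 := by
    intro k k' hkk' i
    simp only [hwdef]
    by_cases h1 : pos i / r = (k : ℕ)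
    · by_cases h2 : pos i / r = (k' : ℕ)
      · exact absurd (by ext; omega) hkk'
      · simp [h2]
    · simp [h1]
  -- sum of norms
  have hNsum : NN v = ∑ k, NN (w k) := by
    unfold NN
    rw [Finset.sum_comm]
    exact (Finset.sum_congr rfl fun i _ => (hpt i (fun x => x ^ 2) (by norm_num))).symm
  -- mulVec decomposition
  have hveq : v = ∑ k, w k := by
    funext i
    rw [Finset.sum_apply]
    exact (hpt i id rfl).symm
  have hmv : Φ.mulVec v = ∑ k, Φ.mulVec (w k) := by
    rw [hveq]
    exact map_sum Φ.mulVecLin w Finset.univ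
  have hQsum : Q Φ v = ∑ k, ∑ k', B Φ (w k) (w k') := by
    unfold Q B
    calc ∑ i, Φ.mulVec v i ^ 2
        = ∑ i, ∑ k, ∑ k', Φ.mulVec (w k) i * Φ.mulVec (w k') i := by
          refine Finset.sum_congr rfl fun i _ => ?_
          rw [hmv, Finset.sum_apply, sq, Finset.sum_mul_sum]
      _ = ∑ k, ∑ k', ∑ i, Φ.mulVec (w k) i * Φ.mulVec (w k') i := by
          rw [Finset.sum_comm]
          exact Finset.sum_congr rfl fun k _ => Finset.sum_comm
  -- per-term bounds
  have hterm : ∀ k k' : Fin c,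
      |B Φ (w k) (w k') - (if k' = k then NN (w k) else 0)| ≤ δ / 2 * (NN (w k) + NN (w k')) := by
    intro k k'
    by_cases hkk : k' = k
    · subst hkk
      simp only [if_pos rfl, B_self]
      calc |Q Φ (w k') - NN (w k')| ≤ δ * NN (w k') :=
            abs_bound h (sparse_mono (by omega) (hw_sparse k'))
        _ = δ / 2 * (NN (w k') + NN (w k')) := by ring
    · simp only [if_neg hkk, sub_zero]
      exact cross h (hw_sparse k) (hw_sparse k') (hdisj k k' (Ne.symm hkk))
  have hdiag : ∑ k : Fin c, ∑ k' : Fin c, (if k' = k then NN (w k) else 0) = NN v := by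
    rw [hNsum]
    exact Finset.sum_congr rfl fun k _ => by simp
  have key2 : Q Φ v - NN v
      = ∑ k : Fin c, ∑ k' : Fin c, (B Φ (w k) (w k') - if k' = k then NN (w k) else 0) := by
    rw [hQsum, ← hdiag, ← Finset.sum_sub_distrib]
    exact Finset.sum_congr rfl fun k _ => by rw [Finset.sum_sub_distrib]
  have habs : |Q Φ v - NN v| ≤ (c : ℝ) * δ * NN v := by
    rw [key2]
    calc |∑ k : Fin c, ∑ k' : Fin c, (B Φ (w k) (w k') - if k' = k then NN (w k) else 0)|
        ≤ ∑ k : Fin c, |∑ k' : Fin c, (B Φ (w k) (w k') - if k' = k then NN (w k) else 0)| :=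
          Finset.abs_sum_le_sum_abs _ _
      _ ≤ ∑ k : Fin c, ∑ k' : Fin c, |B Φ (w k) (w k') - if k' = k then NN (w k) else 0| :=
          Finset.sum_le_sum fun k _ => Finset.abs_sum_le_sum_abs _ _
      _ ≤ ∑ k : Fin c, ∑ k' : Fin c, δ / 2 * (NN (w k) + NN (w k')) :=
          Finset.sum_le_sum fun k _ => Finset.sum_le_sum fun k' _ => hterm k k'
      _ = (c : ℝ) * δ * NN v := by
          rw [hNsum]
          simp only [mul_add, Finset.sum_add_distrib, ← Finset.mul_sum, Finset.sum_const,
            Finset.card_univ, Fintype.card_fin, nsmul_eq_mul]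
          ring
  rw [abs_le] at habs
  constructor <;> linarith [habs.1, habs.2]

end Stmt8

/-- The restricted isometry constant `δ_r` of `Φ`: the smallest `δ ≥ 0` satisfying the
restricted isometry inequalities at sparsity level `r`. -/
noncomputable def ricConst {m d : ℕ} (Φ : Matrix (Fin m) (Fin d) ℝ) (r : ℕ) : ℝ :=
  sInf {δ : ℝ | 0 ≤ δ ∧ RICq Φ r δ}

/-- For positive integers `c` and `r`, `δ_{cr} ≤ c · δ_{2r}`. -/
theorem stmt8 (m d c r : ℕ) (hc : 0 < c) (hr : 0 < r)
    (Φ : Matrix (Fin m) (Fin d) ℝ) :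
    ricConst Φ (c * r) ≤ (c : ℝ) * ricConst Φ (2 * r) := by
  obtain ⟨δ0, hδ0, hR0⟩ := Stmt8.exists_ric Φ (2 * r)
  have hne : {δ : ℝ | 0 ≤ δ ∧ RICq Φ (2 * r) δ}.Nonempty := ⟨δ0, hδ0, hR0⟩
  have hbddcr : BddBelow {δ : ℝ | 0 ≤ δ ∧ RICq Φ (c * r) δ} :=
    ⟨0, fun x hx => hx.1⟩
  have hc' : (0 : ℝ) < c := by exact_mod_cast hc
  have hkey : ∀ δ ∈ {δ : ℝ | 0 ≤ δ ∧ RICq Φ (2 * r) δ},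
      ricConst Φ (c * r) ≤ (c : ℝ) * δ := by
    intro δ hδ
    exact csInf_le hbddcr ⟨mul_nonneg hc'.le hδ.1, Stmt8.key Φ hr hδ.1 hδ.2⟩
  have hdiv : ricConst Φ (c * r) / (c : ℝ) ≤ ricConst Φ (2 * r) := by
    refine le_csInf hne fun δ hδ => ?_
    rw [div_le_iff₀ hc']
    exact le_trans (hkey δ hδ) (by rw [mul_comm])
  linarith [(div_le_iff₀ hc').1 hdiv, mul_comm (ricConst Φ (c*r) / c) (c:ℝ)]
end
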